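/- arXiv:2207.08266 — 2 statements merged into one kernel-verified Lean document; each statement's English description precedes it below -/
import Mathlib

section
/- If Φ is a tight frame in a finite-dimensional Hilbert space H, then every element of its symmetry group Sym(Φ) is a unitary operator. -/
open scoped ComplexInnerProductSpace

/-- Every symmetry of a tight frame is unitary (preserves the inner product). -/
theorem tight_frame_symmetries_unitary {H : Type*} [NormedAddCommGroup H]
    [InnerProductSpace ℂ H] [FiniteDimensional ℂ H] {S : Type*} [Fintype S] (Φ : S → H)
    (A : ℝ) (hA : 0 < A)
    (htight : ∀ v : H, ∑ j, ‖⟪Φ j, v⟫‖ ^ 2 = A * ‖v‖ ^ 2)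
    (M : H ≃ₗ[ℂ] H) (hM : ∃ σ : Equiv.Perm S, ∀ j, M (Φ j) = Φ (σ j)) :
    ∀ v w : H, ⟪M v, M w⟫ = ⟪v, w⟫ := by
  obtain ⟨σ, hσ⟩ := hM
  set T : H →ₗ[ℂ] H := (M : H →ₗ[ℂ] H) with hT
  set Tad : H →ₗ[ℂ] H := LinearMap.adjoint T with hTad
  -- the adjoint of T is norm-preserving
  have hnorm : ∀ w : H, ‖Tad w‖ = ‖w‖ := by
    intro w
    have h1 : ∑ j, ‖⟪Φ (σ j), w⟫‖ ^ 2 = ∑ j, ‖⟪Φ j, w⟫‖ ^ 2 :=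
      Equiv.sum_comp σ (fun j => ‖⟪Φ j, w⟫‖ ^ 2)
    have h2 : ∀ j, ⟪Φ (σ j), w⟫ = ⟪Φ j, Tad w⟫ := by
      intro j
      rw [← hσ j]
      exact (LinearMap.adjoint_inner_right T (Φ j) w).symm
    have h3 : ∑ j, ‖⟪Φ j, Tad w⟫‖ ^ 2 = ∑ j, ‖⟪Φ j, w⟫‖ ^ 2 := by
      rw [← h1]
      exact Finset.sum_congr rfl fun j _ => by rw [h2]
    have h4 : A * ‖Tad w‖ ^ 2 = A * ‖w‖ ^ 2 := by
      rw [← htight, ← htight, h3]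
    have h5 : ‖Tad w‖ ^ 2 = ‖w‖ ^ 2 := mul_left_cancel₀ (ne_of_gt hA) h4
    nlinarith [norm_nonneg (Tad w), norm_nonneg w]
  -- so the adjoint preserves inner products
  have hadj_inner : ∀ v w : H, ⟪Tad v, Tad w⟫ = ⟪v, w⟫ := fun v w =>
    LinearIsometry.inner_map_map ⟨Tad, hnorm⟩ v w
  -- hence T ∘ Tad = id
  have hTTad : ∀ w : H, T (Tad w) = w := by
    intro w
    apply ext_inner_left ℂ
    intro v
    rw [← LinearMap.adjoint_inner_left T (Tad w) v]
    exact hadj_inner v w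
  -- T is bijective, so Tad ∘ T = id
  have hTadT : ∀ v : H, Tad (T v) = v := fun v => M.injective (hTTad (T v))
  intro v w
  calc ⟪M v, M w⟫ = ⟪T v, T w⟫ := rfl
    _ = ⟪v, Tad (T w)⟫ := (LinearMap.adjoint_inner_right T v (T w)).symm
    _ = ⟪v, w⟫ := by rw [hTadT]
end

section
/- If ρ : G → U(H) is an irreducible unitary representation of a finite group G and v ∈ H is nonzero, then the orbit Φ = (ρ(g)v)_{g∈G} is a tight frame: Σ_{g∈G} |⟨w, ρ(g)v⟩|² = (|G|·‖v‖²/dim H)·‖w‖² for every w ∈ H. -/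
open scoped ComplexInnerProductSpace

/-- The orbit of a nonzero vector under an irreducible **unitary** representation of a
finite group is a tight frame with frame constant `|G|·‖v‖²/dim H`. -/
theorem orbit_of_irreducible_unitary_is_tight_frame {G : Type*} [Group G] [Fintype G]
    {H : Type*} [NormedAddCommGroup H] [InnerProductSpace ℂ H] [FiniteDimensional ℂ H]
    [Nontrivial H] (ρ : G →* (H ≃ₗᵢ[ℂ] H))
    (hirr : ∀ W : Submodule ℂ H,
      (∀ g : G, W.map (ρ g).toLinearEquiv.toLinearMap ≤ W) → W = ⊥ ∨ W = ⊤)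
    (v : H) (hv : v ≠ 0) :
    ∀ w : H, ∑ g : G, ‖⟪w, ρ g v⟫‖ ^ 2 =
      (Fintype.card G * ‖v‖ ^ 2 / Module.finrank ℂ H) * ‖w‖ ^ 2 := by
  classical
  -- the frame operator
  set S : Module.End ℂ H :=
    ∑ g : G, ((innerSL ℂ ((ρ g) v)).toLinearMap).smulRight ((ρ g) v) with hS
  have hSapp : ∀ w : H, S w = ∑ g : G, ⟪(ρ g) v, w⟫ • (ρ g) v := by
    intro w
    simp [hS, LinearMap.sum_apply]
  -- S commutes with the representation
  have hcomm : ∀ (g : G) (w : H), S ((ρ g) w) = (ρ g) (S w) := by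
    intro g w
    rw [hSapp, hSapp, map_sum]
    refine (Fintype.sum_equiv (Equiv.mulLeft g)
      (fun h => (ρ g) (⟪(ρ h) v, w⟫ • (ρ h) v))
      (fun h => ⟪(ρ h) v, (ρ g) w⟫ • (ρ h) v) fun k => ?_).symm
    simp only [Equiv.coe_mulLeft, map_mul]
    have h1 : (ρ g * ρ k) v = (ρ g) ((ρ k) v) := rfl
    rw [h1, LinearIsometryEquiv.inner_map_map, LinearIsometryEquiv.map_smul]
  -- Schur's lemma: S is a scalar
  obtain ⟨c, hc⟩ := Module.End.exists_eigenvalue S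
  have hinv : ∀ g : G,
      (Module.End.eigenspace S c).map (ρ g).toLinearEquiv.toLinearMap ≤
        Module.End.eigenspace S c := by
    intro g x hx
    rcases hx with ⟨y, hy, rfl⟩
    simp only [SetLike.mem_coe, Module.End.mem_eigenspace_iff] at hy
    rw [Module.End.mem_eigenspace_iff]
    show S ((ρ g) y) = c • (ρ g) y
    rw [hcomm, hy, LinearIsometryEquiv.map_smul]
  have hW : Module.End.eigenspace S c = ⊤ := by
    rcases hirr (Module.End.eigenspace S c) hinv with h | h
    · exact absurd h hc
    · exact h
  have hSc : ∀ w : H, S w = c • w := by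
    intro w
    have : w ∈ Module.End.eigenspace S c := hW ▸ Submodule.mem_top
    rwa [Module.End.mem_eigenspace_iff] at this
  -- compute the scalar via an orthonormal basis
  set n := Module.finrank ℂ H with hn
  have hnpos : 0 < n := Module.finrank_pos
  let b := stdOrthonormalBasis ℂ H
  have key : c * (n : ℂ) = (Fintype.card G : ℂ) * (‖v‖ : ℂ) ^ 2 := by
    have h1 : ∑ i : Fin n, ⟪b i, S (b i)⟫ = c * (n : ℂ) := by
      have hb1 : ∀ i : Fin n, ⟪b i, b i⟫ = (1 : ℂ) := by
        intro i
        rw [inner_self_eq_norm_sq_to_K, b.orthonormal.1 i]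
        norm_num
      simp only [hSc, inner_smul_right, hb1, mul_one]
      simp [mul_comm]
    have h2 : ∑ i : Fin n, ⟪b i, S (b i)⟫
        = (Fintype.card G : ℂ) * (‖v‖ : ℂ) ^ 2 := by
      have hterm : ∀ i : Fin n, ⟪b i, S (b i)⟫
          = ∑ g : G, ⟪(ρ g) v, b i⟫ * ⟪b i, (ρ g) v⟫ := by
        intro i
        rw [hSapp, inner_sum]
        exact Finset.sum_congr rfl fun g _ => by rw [inner_smul_right]
      rw [Finset.sum_congr rfl fun i _ => hterm i, Finset.sum_comm]
      have hg : ∀ g : G, ∑ i : Fin n, ⟪(ρ g) v, b i⟫ * ⟪b i, (ρ g) v⟫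
          = (‖v‖ : ℂ) ^ 2 := by
        intro g
        rw [b.sum_inner_mul_inner, LinearIsometryEquiv.inner_map_map,
          inner_self_eq_norm_sq_to_K]
        norm_cast
      simp [hg, Finset.sum_const, mul_comm]
    rw [← h1, h2]
  -- conclude
  intro w
  have hcoe : ((∑ g : G, ‖⟪w, (ρ g) v⟫‖ ^ 2 : ℝ) : ℂ) = c * (‖w‖ : ℂ) ^ 2 := by
    push_cast
    have h3 : ∀ g : G, ((‖⟪w, (ρ g) v⟫‖ : ℂ) ^ 2)
        = ⟪(ρ g) v, w⟫ * ⟪w, (ρ g) v⟫ := by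
      intro g
      rw [← inner_conj_symm ((ρ g) v) w, RCLike.conj_mul]
      norm_cast
    calc (∑ g : G, (‖⟪w, (ρ g) v⟫‖ : ℂ) ^ 2)
        = ∑ g : G, ⟪(ρ g) v, w⟫ * ⟪w, (ρ g) v⟫ := Finset.sum_congr rfl fun g _ => h3 g
      _ = ⟪w, S w⟫ := by
          rw [hSapp, inner_sum]
          exact Finset.sum_congr rfl fun g _ => by rw [inner_smul_right]
      _ = c * (‖w‖ : ℂ) ^ 2 := by
          rw [hSc, inner_smul_right, inner_self_eq_norm_sq_to_K]
          norm_cast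
  have hne : (n : ℂ) ≠ 0 := by exact_mod_cast hnpos.ne'
  apply Complex.ofReal_injective
  rw [hcoe]
  have hc' : c = (Fintype.card G : ℂ) * (‖v‖ : ℂ) ^ 2 / (n : ℂ) := by
    field_simp
    linear_combination key
  rw [hc']
  push_cast
  ring
end
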